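/- Let A be a unital C*-algebra and let e₁, …, e_p ∈ A be partial isometries (e_j e_j* e_j = e_j for each j) satisfying e_i e_j* = 0 and e_i* e_j = 0 for all i ≠ j. Let α₁, …, α_p ∈ [0,1) and β₁, …, β_p ∈ ℂ with |β_j| < 1 for each j, and set a = Σ_{j=1}^{p} α_j e_j, x = Σ_{j=1}^{p} β_j e_j, and w = Σ_{j=1}^{p} (β_j/(1 + α_j β_j)) e_j (note 1 + α_j β_j ≠ 0 since |α_j β_j| < 1). Then: (i) w + (x a* w + w a* x)/2 = x, i.e., ( id + x □ a )(w) = x; and (ii) a + (1 − a a*)^{1/2} w (1 − a* a)^{1/2} = Σ_{j=1}^{p} ((α_j + β_j)/(1 + α_j β_j)) e_j. Consequently the Möbius transformation g_a of the open unit ball of A satisfies g_a(x) = Σ_{j=1}^{p} 𝔤_{α_j}(β_j) e_j, where 𝔤_α(β) = (β + α)/(1 + αβ) is the Möbius transformation of the unit disc. -/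

import Mathlib

open Finset


theorem diag_mul {A : Type*} [Ring A] [Algebra ℂ A] {p : ℕ} (u v : Fin p → ℂ)
    (c d : Fin p → A) (h : ∀ i j, i ≠ j → c i * d j = 0) :
    (∑ i, u i • c i) * (∑ j, v j • d j) = ∑ j, (u j * v j) • (c j * d j) := by
  rw [Finset.sum_mul_sum]
  refine Finset.sum_congr rfl fun i _ => ?_
  rw [Finset.sum_eq_single i]
  · rw [smul_mul_assoc, mul_smul_comm, smul_smul]
  · intro j _ hji
    rw [smul_mul_assoc, mul_smul_comm, h i j (Ne.symm hji), smul_zero, smul_zero]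
  · simp

theorem aux_sqrt {A : Type*} [CStarAlgebra A] [PartialOrder A] [StarOrderedRing A]
    {p : ℕ} (u : Fin p → A)
    (htri : ∀ j, u j * star (u j) * u j = u j)
    (ho2 : ∀ i j, i ≠ j → star (u i) * u j = 0)
    (α : Fin p → ℝ) (hα0 : ∀ j, 0 ≤ α j) (hα1 : ∀ j, α j < 1) :
    CFC.sqrt (1 - ∑ j, ((α j : ℂ) * (α j : ℂ)) • (u j * star (u j)))
      = 1 - ∑ j, (1 - ((Real.sqrt (1 - α j ^ 2) : ℝ) : ℂ)) • (u j * star (u j)) := by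
  have hs0 : ∀ j, 0 ≤ Real.sqrt (1 - α j ^ 2) := fun j => Real.sqrt_nonneg _
  have hs2c : ∀ j, ((Real.sqrt (1 - α j ^ 2) : ℝ) : ℂ) ^ 2 = 1 - (α j : ℂ) ^ 2 := by
    intro j
    have h0 : (0:ℝ) ≤ 1 - α j ^ 2 := by nlinarith [hα0 j, hα1 j]
    rw [← Complex.ofReal_pow, Real.sq_sqrt h0]
    push_cast; ring
  have hFF : ∀ i j, i ≠ j → (u i * star (u i)) * (u j * star (u j)) = 0 := fun i j h => by
    rw [mul_assoc, ← mul_assoc (star (u i)), ho2 i j h, zero_mul, mul_zero]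
  have hFFd : ∀ j, (u j * star (u j)) * (u j * star (u j)) = u j * star (u j) := fun j => by
    rw [← mul_assoc, htri j]
  have e1 : ∀ S : A, (1 - S) * (1 - S) = 1 - (S + S - S * S) := fun S => by noncomm_ring
  refine CFC.sqrt_unique ?_ ?_
  · rw [e1, diag_mul (A := A) (fun j => 1 - ((Real.sqrt (1 - α j ^ 2) : ℝ) : ℂ))
      (fun j => 1 - ((Real.sqrt (1 - α j ^ 2) : ℝ) : ℂ))
      (fun j => u j * star (u j)) (fun j => u j * star (u j)) hFF]
    congr 1
    rw [← Finset.sum_add_distrib, ← Finset.sum_sub_distrib]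
    refine Finset.sum_congr rfl fun j _ => ?_
    rw [hFFd j, ← add_smul, ← sub_smul]
    congr 1
    linear_combination -hs2c j
  · have hPP : (∑ j, (1:ℂ) • (u j * star (u j))) * (∑ j, (1:ℂ) • (u j * star (u j)))
        = ∑ j, (1:ℂ) • (u j * star (u j)) := by
      rw [diag_mul (A := A) (fun _ => (1:ℂ)) (fun _ => (1:ℂ))
        (fun j => u j * star (u j)) (fun j => u j * star (u j)) hFF]
      exact Finset.sum_congr rfl fun j _ => by rw [hFFd j, one_mul]
    have hq2 : ((1:A) - ∑ j, (1:ℂ) • (u j * star (u j)))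
        * (1 - ∑ j, (1:ℂ) • (u j * star (u j)))
        = 1 - ∑ j, (1:ℂ) • (u j * star (u j)) := by
      rw [e1, hPP, add_sub_cancel_right]
    have hqstar : star ((1:A) - ∑ j, (1:ℂ) • (u j * star (u j)))
        = 1 - ∑ j, (1:ℂ) • (u j * star (u j)) := by
      simp [star_sub, star_sum, star_smul, star_mul, star_star]
    have hq : 0 ≤ (1:A) - ∑ j, (1:ℂ) • (u j * star (u j)) := by
      have h := star_mul_self_nonneg ((1:A) - ∑ j, (1:ℂ) • (u j * star (u j)))
      rwa [hqstar, hq2] at h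
    have hT : 0 ≤ ∑ j, ((Real.sqrt (1 - α j ^ 2) : ℝ) : ℂ) • (u j * star (u j)) := by
      refine Finset.sum_nonneg fun j _ => ?_
      have key : (((Real.sqrt (Real.sqrt (1 - α j ^ 2)) : ℝ) : ℂ) • u j)
          * star ((((Real.sqrt (Real.sqrt (1 - α j ^ 2))) : ℝ) : ℂ) • u j)
          = ((Real.sqrt (1 - α j ^ 2) : ℝ) : ℂ) • (u j * star (u j)) := by
        rw [star_smul, smul_mul_assoc, mul_smul_comm, smul_smul]
        congr 1
        rw [Complex.star_def, Complex.conj_ofReal, ← Complex.ofReal_mul,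
          Real.mul_self_sqrt (hs0 j)]
      exact key ▸ mul_star_self_nonneg _
    have hsplit : (1:A) - ∑ j, (1 - ((Real.sqrt (1 - α j ^ 2) : ℝ) : ℂ)) • (u j * star (u j))
        = ((1:A) - ∑ j, (1:ℂ) • (u j * star (u j)))
          + ∑ j, ((Real.sqrt (1 - α j ^ 2) : ℝ) : ℂ) • (u j * star (u j)) := by
      have h2 : ∑ j, (1 - ((Real.sqrt (1 - α j ^ 2) : ℝ) : ℂ)) • (u j * star (u j))
          = ∑ j, (1:ℂ) • (u j * star (u j))
            - ∑ j, ((Real.sqrt (1 - α j ^ 2) : ℝ) : ℂ) • (u j * star (u j)) := by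
        rw [← Finset.sum_sub_distrib]
        exact Finset.sum_congr rfl fun j _ => by rw [← sub_smul]
      rw [h2]; abel
    rw [hsplit]
    exact add_nonneg hq hT

/-- Example 6.6 of the paper (computation of the Möbius transformation `g_a` on joint
eigenvectors, for a unital C*-algebra): for mutually orthogonal partial isometries
`e₁, …, e_p`, with `a = Σ α_j e_j`, `x = Σ β_j e_j` and `w = Σ (β_j/(1+α_j β_j)) e_j`,
one has (i) `(id + x □ a)(w) = x` and
(ii) `a + (1 − a a*)^{1/2} w (1 − a* a)^{1/2} = Σ ((α_j + β_j)/(1 + α_j β_j)) e_j`;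
consequently `g_a(x) = Σ 𝔤_{α_j}(β_j) e_j`. -/
theorem stmt16 {A : Type*} [CStarAlgebra A] [PartialOrder A] [StarOrderedRing A]
    (p : ℕ) (e : Fin p → A)
    (htri : ∀ j, e j * star (e j) * e j = e j)
    (horth : ∀ i j, i ≠ j → e i * star (e j) = 0 ∧ star (e i) * e j = 0)
    (α : Fin p → ℝ) (hα0 : ∀ j, 0 ≤ α j) (hα1 : ∀ j, α j < 1)
    (β : Fin p → ℂ) (hβ : ∀ j, ‖β j‖ < 1)
    (a x w : A)
    (ha : a = ∑ j, ((α j : ℂ)) • e j)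
    (hx : x = ∑ j, β j • e j)
    (hw : w = ∑ j, (β j / (1 + (α j : ℂ) * β j)) • e j) :
    (w + (2 : ℂ)⁻¹ • (x * star a * w + w * star a * x) = x)
    ∧ (a + CFC.sqrt (1 - a * star a) * w * CFC.sqrt (1 - star a * a)
        = ∑ j, (((α j : ℂ) + β j) / (1 + (α j : ℂ) * β j)) • e j) := by
  have hne : ∀ j, (1 + (α j : ℂ) * β j) ≠ 0 := by
    intro j h
    have h1 : ‖(α j : ℂ) * β j‖ < 1 := by
      rw [norm_mul, Complex.norm_real, Real.norm_eq_abs, abs_of_nonneg (hα0 j)]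
      nlinarith [norm_nonneg (β j), hβ j, hα0 j, hα1 j]
    have h2 : (α j : ℂ) * β j = -1 := by linear_combination h
    rw [h2] at h1
    simp at h1
  have hs2c : ∀ j, ((Real.sqrt (1 - α j ^ 2) : ℝ) : ℂ) ^ 2 = 1 - (α j : ℂ) ^ 2 := by
    intro j
    have h0 : (0:ℝ) ≤ 1 - α j ^ 2 := by nlinarith [hα0 j, hα1 j]
    rw [← Complex.ofReal_pow, Real.sq_sqrt h0]
    push_cast; ring
  have hsa : star a = ∑ j, ((α j : ℂ)) • star (e j) := by
    rw [ha, star_sum]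
    exact Finset.sum_congr rfl fun j _ => by
      rw [star_smul, Complex.star_def, Complex.conj_ofReal]
  have hFe : ∀ i j, i ≠ j → (e i * star (e i)) * e j = 0 := fun i j h => by
    rw [mul_assoc, (horth i j h).2, mul_zero]
  have heG : ∀ i j, i ≠ j → e i * (star (e j) * e j) = 0 := fun i j h => by
    rw [← mul_assoc, (horth i j h).1, zero_mul]
  have heGd : ∀ j, e j * (star (e j) * e j) = e j := fun j => by
    rw [← mul_assoc]; exact htri j
  -- products
  have P1 : (∑ j, β j • e j) * (∑ j, ((α j : ℂ)) • star (e j))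
      = ∑ j, (β j * (α j : ℂ)) • (e j * star (e j)) :=
    diag_mul _ _ _ _ (fun i j h => (horth i j h).1)
  have P2 : (∑ j, (β j / (1 + (α j : ℂ) * β j)) • e j) * (∑ j, ((α j : ℂ)) • star (e j))
      = ∑ j, ((β j / (1 + (α j : ℂ) * β j)) * (α j : ℂ)) • (e j * star (e j)) :=
    diag_mul _ _ _ _ (fun i j h => (horth i j h).1)
  have P3 : (∑ j, (β j * (α j : ℂ)) • (e j * star (e j)))
        * (∑ j, (β j / (1 + (α j : ℂ) * β j)) • e j)
      = ∑ j, ((β j * (α j : ℂ)) * (β j / (1 + (α j : ℂ) * β j))) • ((e j * star (e j)) * e j) :=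
    diag_mul _ _ _ _ hFe
  have P4 : (∑ j, ((β j / (1 + (α j : ℂ) * β j)) * (α j : ℂ)) • (e j * star (e j)))
        * (∑ j, β j • e j)
      = ∑ j, (((β j / (1 + (α j : ℂ) * β j)) * (α j : ℂ)) * β j) • ((e j * star (e j)) * e j) :=
    diag_mul _ _ _ _ hFe
  have P5 : (∑ j, ((α j : ℂ)) • e j) * (∑ j, ((α j : ℂ)) • star (e j))
      = ∑ j, ((α j : ℂ) * (α j : ℂ)) • (e j * star (e j)) :=
    diag_mul _ _ _ _ (fun i j h => (horth i j h).1)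
  have P6 : (∑ j, ((α j : ℂ)) • star (e j)) * (∑ j, ((α j : ℂ)) • e j)
      = ∑ j, ((α j : ℂ) * (α j : ℂ)) • (star (e j) * e j) :=
    diag_mul _ _ _ _ (fun i j h => (horth i j h).2)
  constructor
  · rw [hx, hsa, hw]
    rw [P1, P3, P2, P4, ← Finset.sum_add_distrib, Finset.smul_sum, ← Finset.sum_add_distrib]
    refine Finset.sum_congr rfl fun j _ => ?_
    rw [htri j, smul_add, smul_smul, smul_smul, ← add_smul, ← add_smul]
    congr 1
    have h3 := hne j
    have h3' : 1 + β j * (α j : ℂ) ≠ 0 := by rw [mul_comm]; exact hne j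
    field_simp
    ring
  · have haa : a * star a = ∑ j, ((α j : ℂ) * (α j : ℂ)) • (e j * star (e j)) := by
      rw [hsa, ha]; exact P5
    have hsaa : star a * a = ∑ j, ((α j : ℂ) * (α j : ℂ)) • (star (e j) * e j) := by
      rw [hsa, ha]; exact P6
    have htri' : ∀ j, star (e j) * star (star (e j)) * star (e j) = star (e j) := by
      intro j
      simpa [star_mul, star_star, mul_assoc] using congrArg star (htri j)
    have ho2' : ∀ i j, i ≠ j → star (star (e i)) * star (e j) = 0 := by
      intro i j h; rw [star_star]; exact (horth i j h).1
    have hsf : CFC.sqrt (1 - a * star a)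
        = 1 - ∑ j, (1 - ((Real.sqrt (1 - α j ^ 2) : ℝ) : ℂ)) • (e j * star (e j)) := by
      rw [haa]
      exact aux_sqrt e htri (fun i j h => (horth i j h).2) α hα0 hα1
    have hsg : CFC.sqrt (1 - star a * a)
        = 1 - ∑ j, (1 - ((Real.sqrt (1 - α j ^ 2) : ℝ) : ℂ)) • (star (e j) * e j) := by
      rw [hsaa]
      have h := aux_sqrt (fun j => star (e j)) htri' ho2' α hα0 hα1
      simp only [star_star] at h
      exact h
    have hfw : (1 - ∑ j, (1 - ((Real.sqrt (1 - α j ^ 2) : ℝ) : ℂ)) • (e j * star (e j))) * w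
        = ∑ j, (((Real.sqrt (1 - α j ^ 2) : ℝ) : ℂ)
            * (β j / (1 + (α j : ℂ) * β j))) • e j := by
      rw [hw, sub_mul, one_mul,
        diag_mul (fun j => 1 - ((Real.sqrt (1 - α j ^ 2) : ℝ) : ℂ))
          (fun j => β j / (1 + (α j : ℂ) * β j)) (fun j => e j * star (e j)) e hFe,
        ← Finset.sum_sub_distrib]
      refine Finset.sum_congr rfl fun j _ => ?_
      rw [htri j, ← sub_smul]
      congr 1
      ring
    have hfwg : (∑ j, (((Real.sqrt (1 - α j ^ 2) : ℝ) : ℂ)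
            * (β j / (1 + (α j : ℂ) * β j))) • e j)
        * (1 - ∑ j, (1 - ((Real.sqrt (1 - α j ^ 2) : ℝ) : ℂ)) • (star (e j) * e j))
        = ∑ j, ((((Real.sqrt (1 - α j ^ 2) : ℝ) : ℂ)
            * (β j / (1 + (α j : ℂ) * β j))) * ((Real.sqrt (1 - α j ^ 2) : ℝ) : ℂ)) • e j := by
      rw [mul_sub, mul_one,
        diag_mul (fun j => ((Real.sqrt (1 - α j ^ 2) : ℝ) : ℂ) * (β j / (1 + (α j : ℂ) * β j)))
          (fun j => 1 - ((Real.sqrt (1 - α j ^ 2) : ℝ) : ℂ)) e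
          (fun j => star (e j) * e j) heG,
        ← Finset.sum_sub_distrib]
      refine Finset.sum_congr rfl fun j _ => ?_
      rw [heGd j, ← sub_smul]
      congr 1
      ring
    rw [hsf, hsg, hfw, hfwg, ha, ← Finset.sum_add_distrib]
    refine Finset.sum_congr rfl fun j _ => ?_
    rw [← add_smul]
    congr 1
    have h2 := hs2c j
    have h3 := hne j
    field_simp
    linear_combination (β j) * h2
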